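/- Let d ≥ 2 and p_c(d) < p < q with associated scale-1 good boxes for the coupled percolations. Let A ⊆ ℤ^d and let ℐ be a finite *-connected set of sites, all (p,q)-good at scale 1, such that dis(A, ⋃_{i ∈ ℐ} B_{N₁}(i)) > (14β + 2d) N₁. Let j, k ∈ ℐ, let x ∈ B′_{N₁}(j) belong to the p-crossing cluster of B_{N₁}(j) and let y ∈ B′_{N₁}(k) belong to the p-crossing cluster of B_{N₁}(k). Then there exists a p-open path joining x and y, of length at most 12 β N₁ |ℐ|, that visits no point of A. -/

import Mathlib

open scoped Classical

namespace FPP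

abbrev Vert (d : ℕ) := Fin d → ℤ

abbrev EdgeIdx (d : ℕ) := (Fin d → ℤ) × Fin d

def unitVec (d : ℕ) (i : Fin d) : Vert d := fun j => if j = i then 1 else 0

/-- ℓ¹-distance on ℤ^d. -/
def dist1 {d : ℕ} (x y : Vert d) : ℕ := ∑ i, (x i - y i).natAbs

/-- ℓ¹-norm on ℤ^d. -/
def norm1 {d : ℕ} (x : Vert d) : ℕ := ∑ i, (x i).natAbs

/-- ℓ∞-distance on ℤ^d. -/
def distInfty {d : ℕ} (x y : Vert d) : ℕ := Finset.univ.sup fun i => (x i - y i).natAbs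

/-- Nearest-neighbour adjacency on ℤ^d. -/
def adj {d : ℕ} (x y : Vert d) : Prop := dist1 x y = 1

/-- *-adjacency on ℤ^d. -/
def adjStar {d : ℕ} (x y : Vert d) : Prop := distInfty x y = 1

/-- A percolation configuration: each edge `(x, x + eᵢ)` is open (`true`) or closed. -/
abbrev Config (d : ℕ) := EdgeIdx d → Bool

/-- The unordered pair `{x,y}` is an open edge of the configuration `ω`. -/
def edgeOpenPair {d : ℕ} (ω : Config d) (x y : Vert d) : Prop :=
  ∃ i : Fin d, (y = x + unitVec d i ∧ ω (x, i) = true) ∨ (x = y + unitVec d i ∧ ω (y, i) = true)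

/-- An open path: a nonempty list of vertices whose consecutive steps are open edges. -/
def IsOpenPath {d : ℕ} (ω : Config d) (γ : List (Vert d)) : Prop :=
  γ ≠ [] ∧ γ.Chain' (edgeOpenPair ω)

def PathFromTo {d : ℕ} (γ : List (Vert d)) (x y : Vert d) : Prop :=
  γ.head? = some x ∧ γ.getLast? = some y

def Connected {d : ℕ} (ω : Config d) (x y : Vert d) : Prop :=
  ∃ γ, IsOpenPath ω γ ∧ PathFromTo γ x y

/-- The open cluster of a vertex. -/
def cluster {d : ℕ} (ω : Config d) (x : Vert d) : Set (Vert d) := {y | Connected ω x y}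

/-- The chemical distance (graph distance in the open subgraph), `⊤` if not connected. -/
noncomputable def chemDist {d : ℕ} (ω : Config d) (x y : Vert d) : ℕ∞ :=
  ⨅ (γ : List (Vert d)) (_ : IsOpenPath ω γ ∧ PathFromTo γ x y), ((γ.length - 1 : ℕ) : ℕ∞)

/-- Graph distance inside the infinite cluster: `⊤` unless both points lie in an
infinite cluster. -/
noncomputable def distInfCl {d : ℕ} (ω : Config d) (x y : Vert d) : ℕ∞ :=
  if (cluster ω x).Infinite ∧ (cluster ω y).Infinite then chemDist ω x y else ⊤

/-- The union of the infinite open clusters (a.s. the unique infinite cluster). -/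
def infClusterSet {d : ℕ} (ω : Config d) : Set (Vert d) := {y | (cluster ω y).Infinite}

/-- `tilde C x` : a point of `C` minimizing the ℓ¹-distance to `x`
(with a deterministic rule to break ties). -/
noncomputable def tilde {d : ℕ} (C : Set (Vert d)) (x : Vert d) : Vert d :=
  if h : ∃ y, y ∈ C ∧ ∀ z ∈ C, dist1 x y ≤ dist1 x z then h.choose else x

/-- An i.i.d. Bernoulli bond percolation model on ℤ^d with parameter `p`. -/
structure PercModel (d : ℕ) (p : ℝ) where
  Ω : Type
  [mΩ : MeasurableSpace Ω]
  P : MeasureTheory.Measure Ω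
  isProb : MeasureTheory.IsProbabilityMeasure P
  X : EdgeIdx d → Ω → Bool
  meas : ∀ e, Measurable (X e)
  indep : ProbabilityTheory.iIndepFun X P
  bern : ∀ e, P {ω | X e ω = true} = ENNReal.ofReal p

def PercModel.cfg {d : ℕ} {p : ℝ} (M : PercModel d p) (ω : M.Ω) : Config d :=
  fun e => M.X e ω

/-- The critical parameter of i.i.d. Bernoulli bond percolation on ℤ^d. -/
noncomputable def pc (d : ℕ) : ℝ :=
  sInf {p : ℝ | p ∈ Set.Icc (0:ℝ) 1 ∧
    ∀ M : PercModel d p, 0 < M.P {ω | (cluster (M.cfg ω) 0).Infinite}}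

/-- `μ` is the time constant for the law `G_p = p δ₁ + (1-p) δ_∞`: for every model of
Bernoulli percolation at parameter `p`, the regularized chemical distance
`D^{𝒞_p}(0̃, ñx)/n` converges almost surely to `μ x`. -/
def TimeConstant (d : ℕ) (p : ℝ) (μ : Vert d → ℝ) : Prop :=
  ∀ M : PercModel d p, ∀ x : Vert d,
    ∀ᵐ ω ∂M.P, Filter.Tendsto
      (fun n : ℕ =>
        ((distInfCl (M.cfg ω) (tilde (infClusterSet (M.cfg ω)) 0)
            (tilde (infClusterSet (M.cfg ω)) ((n : ℤ) • x))).toNat : ℝ) / n)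
      Filter.atTop (nhds (μ x))


/-- The box `[−N/2, N/2)^d ∩ ℤ^d`. -/
def boxZ (d : ℕ) (N : ℕ) : Set (Vert d) :=
  {x | ∀ i, -((N : ℝ) / 2) ≤ (x i : ℝ) ∧ (x i : ℝ) < (N : ℝ) / 2}

/-- The translated box `B_N(i) = iN + B_N`. -/
def boxAt (d : ℕ) (N : ℕ) (i : Vert d) : Set (Vert d) := {v | v - (N : ℤ) • i ∈ boxZ d N}

/-- The enlarged box `B′_N(i) = iN + B_{3N}`. -/
def boxAt' (d : ℕ) (N : ℕ) (i : Vert d) : Set (Vert d) :=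
  {v | v - (N : ℤ) • i ∈ boxZ d (3 * N)}

/-- An open path staying inside the set `S`. -/
def IsOpenPathIn {d : ℕ} (ω : Config d) (S : Set (Vert d)) (γ : List (Vert d)) : Prop :=
  IsOpenPath ω γ ∧ ∀ v ∈ γ, v ∈ S

def ConnectedIn {d : ℕ} (ω : Config d) (S : Set (Vert d)) (x y : Vert d) : Prop :=
  ∃ γ, IsOpenPathIn ω S γ ∧ PathFromTo γ x y

/-- The open cluster of `x` in the configuration restricted to `S`. -/
def clusterIn {d : ℕ} (ω : Config d) (S : Set (Vert d)) (x : Vert d) : Set (Vert d) :=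
  {y | ConnectedIn ω S x y}

/-- `C` is a cluster of the configuration restricted to `S`. -/
def IsClusterIn {d : ℕ} (ω : Config d) (S C : Set (Vert d)) : Prop :=
  ∃ x ∈ S, C = clusterIn ω S x

/-- The ℓ∞-diameter of `C` is larger than `N`. -/
def DiamGT {d : ℕ} (C : Set (Vert d)) (N : ℕ) : Prop :=
  ∃ x ∈ C, ∃ y ∈ C, N < distInfty x y

/-- The cluster `C` is crossing for the box `B`: for each pair of opposite faces of `B`
there is an open path in `C ∩ B` connecting them. -/
def Crossing {d : ℕ} (ω : Config d) (C B : Set (Vert d)) : Prop :=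
  ∀ i : Fin d, ∃ x ∈ C ∩ B, ∃ y ∈ C ∩ B,
    (∀ z ∈ B, x i ≤ z i) ∧ (∀ z ∈ B, z i ≤ y i) ∧ ConnectedIn ω (C ∩ B) x y

/-- The site `i` is `(p,q)`-good at scale 1 (for the box size `N`): (i) there is a unique
`p`-cluster `𝒞` in `B′_N(i)` of diameter larger than `N`; (ii) `𝒞` is crossing for each of
the `3^d` `N`-boxes included in `B′_N(i)`; (iii) points of `𝒞` are joined by `p`-open paths
of length at most `12βN`; (iv) every `q`-open path of length at least `N` in `B′_N(i)`
meets `𝒞`. -/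
def GoodOne (d : ℕ) (ωp ωq : Config d) (β : ℝ) (N : ℕ) (i : Vert d) : Prop :=
  (∃! C : Set (Vert d), IsClusterIn ωp (boxAt' d N i) C ∧ DiamGT C N) ∧
  ∀ C : Set (Vert d), IsClusterIn ωp (boxAt' d N i) C → DiamGT C N →
    ((∀ j : Vert d, boxAt d N j ⊆ boxAt' d N i → Crossing ωp C (boxAt d N j)) ∧
     (∀ x ∈ C, ∀ y ∈ C, ∃ γ : List (Vert d), IsOpenPath ωp γ ∧ PathFromTo γ x y ∧
        ((γ.length : ℝ) - 1) ≤ 12 * β * (N : ℝ)) ∧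
     (∀ γ : List (Vert d), IsOpenPath ωq γ → (∀ v ∈ γ, v ∈ boxAt' d N i) →
        N + 1 ≤ γ.length → ∃ v ∈ γ, v ∈ C))

/-- The connected cluster of `good`-bad sites containing `j` (empty if `j` is good). -/
def badCluster {d : ℕ} (good : Vert d → Prop) (j : Vert d) : Set (Vert d) :=
  {m | ∃ γ : List (Vert d), γ ≠ [] ∧ γ.Chain' adj ∧ PathFromTo γ j m ∧ ∀ v ∈ γ, ¬ good v}

/-- `Nscale l k = N_k = l₁ ⋯ l_k` (here `l j` stands for `l_{j+1}`). -/
def Nscale (l : ℕ → ℕ) (k : ℕ) : ℕ := ∏ j ∈ Finset.range k, l j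

/-- `(p,q)`-good sites at every scale: at scale 1 via `GoodOne`; the site `i` is good at
scale `k+1` when all the clusters of bad scale-`k` sites met from `B̲′_{k+1}(i)` have
cardinality at most `l_{k+1}`. -/
def GoodSite (d : ℕ) (ωp ωq : Config d) (β : ℝ) (l : ℕ → ℕ) : ℕ → Vert d → Prop
  | 0, _ => True
  | 1, i => GoodOne d ωp ωq β (Nscale l 1) i
  | (k + 2), i =>
      ∀ j : Vert d, (j - (l (k + 1) : ℤ) • i) ∈ boxZ d (3 * l (k + 1)) →
        (badCluster (GoodSite d ωp ωq β l (k + 1)) j).Finite ∧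
        (badCluster (GoodSite d ωp ωq β l (k + 1)) j).ncard ≤ l (k + 1)

/-- `n_k(γ)`: the number of `(p,q)`-bad sites at scale `k` whose `N_k`-box meets `γ`. -/
noncomputable def nBad (d : ℕ) (ωp ωq : Config d) (β : ℝ) (l : ℕ → ℕ) (k : ℕ)
    (γ : List (Vert d)) : ℕ :=
  {i : Vert d | ¬ GoodSite d ωp ωq β l k i ∧ ∃ v ∈ γ, v ∈ boxAt d (Nscale l k) i}.ncard

/-- A nearest-neighbour connection between `x` and `y` inside the set `S`. -/
def ConnInSet {d : ℕ} (S : Set (Vert d)) (x y : Vert d) : Prop :=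
  ∃ γ : List (Vert d), γ ≠ [] ∧ γ.Chain' adj ∧ (∀ v ∈ γ, v ∈ S) ∧ PathFromTo γ x y

/-- `x` is connected to infinity by a path inside `S` (equivalently, the connected
component of `x` in `S` is infinite). -/
def ConnToInfinity {d : ℕ} (S : Set (Vert d)) (x : Vert d) : Prop :=
  {y | ConnInSet S x y}.Infinite

/-- The exterior vertex boundary `∂_v C`. -/
def extBoundary {d : ℕ} (C : Set (Vert d)) : Set (Vert d) :=
  {i | i ∉ C ∧ (∃ j ∈ C, adj i j) ∧ ConnToInfinity Cᶜ i}

/-- The interior of `C`: sites outside `C` that are not connected to infinity by a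
ℤ^d-path avoiding `C`. -/
def interiorOf {d : ℕ} (C : Set (Vert d)) : Set (Vert d) :=
  {i | i ∉ C ∧ ¬ ConnToInfinity Cᶜ i}

/-- `S` is a *-connected set of sites. -/
def StarConnected {d : ℕ} (S : Set (Vert d)) : Prop :=
  ∀ x ∈ S, ∀ y ∈ S, ∃ γ : List (Vert d), γ ≠ [] ∧ γ.Chain' adjStar ∧
    (∀ v ∈ γ, v ∈ S) ∧ PathFromTo γ x y

/-- `S` is a shell (at scale-1 box size `N`) for the edge with endpoints `a, b`:
a *-connected set of sites with `∂_v(int S) = S`, the edge lying inside a box of the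
interior of `S`. -/
def IsShell (d : ℕ) (N : ℕ) (S : Set (Vert d)) (a b : Vert d) : Prop :=
  StarConnected S ∧ extBoundary (interiorOf S) = S ∧
  ∃ i ∈ interiorOf S, a ∈ boxAt d N i ∧ b ∈ boxAt d N i

/-- The set of (oriented pairs representing the) edges of the path `γ`. -/
def edgeSetOf {d : ℕ} (γ : List (Vert d)) : Set (Vert d × Vert d) :=
  {z | z ∈ γ.zip γ.tail ∨ z.swap ∈ γ.zip γ.tail}

/-- The edges of `γ` lying outside `B_{4N_M} ∪ (x + B_{4N_M})`, as a finite set of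
pairs of consecutive vertices of `γ`. -/
noncomputable def gammaBar (d : ℕ) (NM : ℕ) (x : Vert d) (γ : List (Vert d)) :
    Finset (Vert d × Vert d) :=
  ((γ.zip γ.tail).toFinset).filter (fun z =>
    z.1 ∉ boxZ d (4 * NM) ∧ z.2 ∉ boxZ d (4 * NM) ∧
    z.1 - x ∉ boxZ d (4 * NM) ∧ z.2 - x ∉ boxZ d (4 * NM))

/-! ### Auxiliary list lemmas -/

section ListAux
variable {α : Type*}

lemma mem_of_getLast?eq {l : List α} {a : α} (h : l.getLast? = some a) : a ∈ l := by
  obtain ⟨h', rfl⟩ := List.mem_getLast?_eq_getLast (by simpa using h)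
  exact List.getLast_mem h'

lemma chain_glue {R : α → α → Prop} {γ₁ γ₂ : List α} {a b c : α}
    (h₁ : γ₁.Chain' R) (h₂ : γ₂.Chain' R) (ha : γ₁.head? = some a)
    (e₁ : γ₁.getLast? = some b) (e₂ : γ₂.head? = some b) (ec : γ₂.getLast? = some c) :
    ∃ γ : List α, γ.Chain' R ∧ γ.head? = some a ∧ γ.getLast? = some c ∧
      γ.length + 1 = γ₁.length + γ₂.length ∧ ∀ v ∈ γ, v ∈ γ₁ ∨ v ∈ γ₂ := by
  have hγ₁ne : γ₁ ≠ [] := by rintro rfl; simp at ha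
  obtain ⟨b', t, rfl⟩ : ∃ b' t, γ₂ = b' :: t := by
    cases γ₂ with
    | nil => simp at e₂
    | cons b' t => exact ⟨b', t, rfl⟩
  have hb : b = b' := (by simpa using e₂ : b' = b).symm
  subst hb
  cases t with
  | nil =>
    have hcb : b = c := by simpa using ec
    subst hcb
    exact ⟨γ₁, h₁, ha, e₁, by simp, fun v hv => Or.inl hv⟩
  | cons u t' =>
    refine ⟨γ₁ ++ (u :: t'), ?_, ?_, ?_, ?_, ?_⟩
    · unfold List.Chain'; rw [List.isChain_append]
      refine ⟨h₁, (List.isChain_cons.1 h₂).2, ?_⟩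
      intro p hp q hq
      rw [e₁] at hp
      have hp' : b = p := by simpa using hp
      have hq' : u = q := by simpa using hq
      subst hp'; subst hq'
      exact (List.isChain_cons.1 h₂).1 u (by simp)
    · rw [List.head?_append_of_ne_nil _ hγ₁ne]; exact ha
    · rw [List.getLast?_append_of_ne_nil _ (by simp : (u :: t') ≠ [])]
      rw [List.getLast?_cons_cons] at ec; exact ec
    · simp only [List.length_append, List.length_cons]; omega
    · intro v hv
      rcases List.mem_append.1 hv with h | h
      · exact Or.inl h
      · exact Or.inr (List.mem_cons_of_mem _ h)

lemma chain_dedup {R : α → α → Prop} :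
    ∀ (n : ℕ) (γ : List α), γ.length ≤ n → γ.Chain' R →
      ∃ γ' : List α, γ'.Chain' R ∧ γ'.Nodup ∧ γ'.head? = γ.head? ∧
        γ'.getLast? = γ.getLast? ∧ ∀ v ∈ γ', v ∈ γ := by
  intro n
  induction n with
  | zero =>
    intro γ hl _
    have : γ = [] := List.length_eq_zero_iff.1 (Nat.le_zero.1 hl)
    subst this
    exact ⟨[], List.isChain_nil, by simp, rfl, rfl, by simp⟩
  | succ n ih =>
    intro γ hl hc
    cases γ with
    | nil => exact ⟨[], List.isChain_nil, by simp, rfl, rfl, by simp⟩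
    | cons a t =>
      by_cases hat : a ∈ t
      · obtain ⟨s, r, rfl⟩ := List.append_of_mem hat
        have hlen : (a :: r).length ≤ n := by
          simp only [List.length_cons, List.length_append] at hl ⊢; omega
        have hsuf : (a :: r) <:+ a :: (s ++ a :: r) :=
          ⟨a :: s, by simp⟩
        obtain ⟨γ', c', nd', hh, hlast, hmem⟩ := ih (a :: r) hlen (List.IsChain.suffix hc hsuf)
        refine ⟨γ', c', nd', ?_, ?_, ?_⟩
        · rw [hh]; simp
        · rw [hlast,
            show a :: (s ++ a :: r) = (a :: s) ++ a :: r by simp,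
            List.getLast?_append_cons]
        · intro v hv
          have := hmem v hv
          simp only [List.mem_cons, List.mem_append] at this ⊢
          tauto
      · have hlen : t.length ≤ n := by simpa using hl
        obtain ⟨t', c', nd', hh, hlast, hmem⟩ := ih t hlen (List.IsChain.tail hc)
        refine ⟨a :: t', ?_, ?_, rfl, ?_, ?_⟩
        · unfold List.Chain'; rw [List.isChain_cons]
          refine ⟨?_, c'⟩
          rw [hh]
          exact (List.isChain_cons.1 hc).1
        · exact List.nodup_cons.2 ⟨fun h => hat (hmem a h), nd'⟩
        · cases t with
          | nil =>
            have ht' : t' = [] := by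
              cases t' with
              | nil => rfl
              | cons b tb => simp at hh
            subst ht'; rfl
          | cons b tt =>
            have ht' : t' ≠ [] := by
              intro h; subst h; simp at hh
            rw [show (a :: t') = [a] ++ t' from rfl,
              List.getLast?_append_of_ne_nil _ ht', hlast, List.getLast?_cons_cons]
        · intro v hv
          rcases List.mem_cons.1 hv with rfl | hv'
          · exact List.mem_cons_self
          · exact List.mem_cons_of_mem _ (hmem v hv')

/-- Alternating list `[x, u, x, u, ...]` of given length. -/
def pingpong (x u : α) : ℕ → List α
  | 0 => []
  | n + 1 => x :: pingpong u x n

lemma pingpong_length : ∀ (n : ℕ) (x u : α), (pingpong x u n).length = n := by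
  intro n
  induction n with
  | zero => intro x u; rfl
  | succ m ih => intro x u; simpa [pingpong] using ih u x

lemma pingpong_mem : ∀ {n : ℕ} {x u v : α}, v ∈ pingpong x u n → v = x ∨ v = u := by
  intro n
  induction n with
  | zero => intro x u v h; simp [pingpong] at h
  | succ m ih =>
    intro x u v h
    rcases List.mem_cons.1 h with rfl | h'
    · exact Or.inl rfl
    · exact (ih h').symm

lemma pingpong_chain {R : α → α → Prop} :
    ∀ (n : ℕ) {x u : α}, R x u → R u x → (pingpong x u n).Chain' R := by
  intro n
  induction n with
  | zero => intro x u _ _; exact List.isChain_nil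
  | succ m ih =>
    intro x u hxu hux
    show List.Chain' R (x :: pingpong u x m)
    unfold List.Chain'; rw [List.isChain_cons]
    refine ⟨?_, ih hux hxu⟩
    intro y hy
    cases m with
    | zero => simp [pingpong] at hy
    | succ k =>
      have : u = y := by simpa [pingpong] using hy
      subst this; exact hxu

end ListAux

/-! ### Basic geometry lemmas -/

section Geom
variable {d : ℕ}

lemma edgeOpenPair_symm {ω : Config d} {x y : Vert d} (h : edgeOpenPair ω x y) :
    edgeOpenPair ω y x := by
  obtain ⟨i, h | h⟩ := h
  · exact ⟨i, Or.inr h⟩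
  · exact ⟨i, Or.inl h⟩

lemma edgeOpenPair_mono {ωp ωq : Config d} (hc : ∀ e, ωp e = true → ωq e = true)
    {x y : Vert d} (h : edgeOpenPair ωp x y) : edgeOpenPair ωq x y := by
  obtain ⟨i, h | h⟩ := h
  · exact ⟨i, Or.inl ⟨h.1, hc _ h.2⟩⟩
  · exact ⟨i, Or.inr ⟨h.1, hc _ h.2⟩⟩

lemma dist1_self (x : Vert d) : dist1 x x = 0 := by simp [dist1]

lemma dist1_comm (x y : Vert d) : dist1 x y = dist1 y x := by
  unfold dist1
  refine Finset.sum_congr rfl fun i _ => ?_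
  rw [← Int.natAbs_neg, neg_sub]

lemma dist1_triangle (x y z : Vert d) : dist1 x z ≤ dist1 x y + dist1 y z := by
  unfold dist1
  rw [← Finset.sum_add_distrib]
  refine Finset.sum_le_sum fun i _ => ?_
  have h : x i - z i = (x i - y i) + (y i - z i) := by ring
  rw [h]
  exact Int.natAbs_add_le _ _

lemma dist1_coord_le (x y : Vert d) (c : Fin d) : (x c - y c).natAbs ≤ dist1 x y := by
  unfold dist1
  exact Finset.single_le_sum (f := fun i => (x i - y i).natAbs)
    (fun _ _ => Nat.zero_le _) (Finset.mem_univ c)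

lemma dist1_unitVec (x : Vert d) (i : Fin d) : dist1 x (x + unitVec d i) = 1 := by
  unfold dist1 unitVec
  have h : ∀ j : Fin d,
      (x j - (x + fun j => if j = i then (1:ℤ) else 0) j).natAbs
        = if j = i then 1 else 0 := by
    intro j
    by_cases hj : j = i <;> simp [hj, Pi.add_apply]
  rw [Finset.sum_congr rfl fun j _ => h j]
  simp

lemma edgeOpenPair_dist1 {ω : Config d} {x y : Vert d} (h : edgeOpenPair ω x y) :
    dist1 x y = 1 := by
  obtain ⟨i, h | h⟩ := h
  · rw [h.1]; exact dist1_unitVec x i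
  · rw [h.1, dist1_comm]; exact dist1_unitVec y i

lemma chain_dist1_head {ω : Config d} :
    ∀ (γ : List (Vert d)), γ.Chain' (edgeOpenPair ω) → ∀ {a v : Vert d},
      γ.head? = some a → v ∈ γ → dist1 a v + 1 ≤ γ.length := by
  intro γ
  induction γ with
  | nil => intro _ a v _ hv; simp at hv
  | cons b t iht =>
    intro hc a v hh hv
    have hb : b = a := by simpa using hh
    subst hb
    rcases List.mem_cons.1 hv with rfl | hv'
    · simp [dist1_self]
    · cases t with
      | nil => simp at hv'
      | cons u tt =>
        have h1 : edgeOpenPair ω b u := (List.isChain_cons_cons.1 hc).1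
        have h2 := iht (List.isChain_cons_cons.1 hc).2 (a := u) rfl hv'
        have h3 := dist1_triangle b u v
        have h4 := edgeOpenPair_dist1 h1
        simp only [List.length_cons] at h2 ⊢
        omega

lemma distInfty_self (x : Vert d) : distInfty x x = 0 := by
  refine Nat.le_zero.1 (Finset.sup_le fun c _ => ?_)
  simp

end Geom

/-! ### Box lemmas -/

section Boxes
variable {d N : ℕ}

lemma box_subset_box' (hN : 1 ≤ N) {i i' : Vert d} (h : distInfty i i' ≤ 1) :
    boxAt d N i' ⊆ boxAt' d N i := by
  intro v hv c
  have hv' := hv c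
  simp only [boxAt, boxAt', boxZ, Set.mem_setOf_eq, Pi.sub_apply, Pi.smul_apply,
    smul_eq_mul] at hv' ⊢
  have hdc : (i c - i' c).natAbs ≤ 1 :=
    le_trans (Finset.le_sup (f := fun c => (i c - i' c).natAbs) (Finset.mem_univ c)) h
  have hint : -1 ≤ i' c - i c ∧ i' c - i c ≤ 1 := by omega
  have hdr : |(i' c : ℝ) - i c| ≤ 1 := by
    rw [abs_le]
    constructor
    · exact_mod_cast hint.1
    · exact_mod_cast hint.2
  have hN' : (1 : ℝ) ≤ N := by exact_mod_cast hN
  have habs := abs_le.1 hdr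
  have hmul1 : -(N : ℝ) ≤ (N : ℝ) * ((i' c : ℝ) - i c) := by nlinarith
  have hmul2 : (N : ℝ) * ((i' c : ℝ) - i c) ≤ N := by nlinarith
  have hsplit : ((v c : ℝ) - N * i c) = ((v c : ℝ) - N * i' c) + N * ((i' c : ℝ) - i c) := by
    ring
  push_cast at hv' ⊢
  constructor
  · nlinarith [hv'.1]
  · nlinarith [hv'.2]

lemma near_box_mem_box' (hN : 1 ≤ N) {i' x u : Vert d}
    (hx : x ∈ boxAt d N i') (hd : dist1 x u ≤ 1) : u ∈ boxAt' d N i' := by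
  intro c
  have hx' := hx c
  simp only [boxAt, boxAt', boxZ, Set.mem_setOf_eq, Pi.sub_apply, Pi.smul_apply,
    smul_eq_mul] at hx' ⊢
  have hcab : (x c - u c).natAbs ≤ 1 := le_trans (dist1_coord_le x u c) hd
  set z : ℤ := x c - (N : ℤ) * i' c with hz
  set w : ℤ := u c - (N : ℤ) * i' c with hw
  have hwz : -1 ≤ w - z ∧ w - z ≤ 1 := by
    constructor <;> omega
  have hz1 : -((N : ℝ) / 2) ≤ (z : ℝ) := by
    push_cast at hx' ⊢; linarith [hx'.1]
  have hz2 : (z : ℝ) < (N : ℝ) / 2 := by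
    push_cast at hx' ⊢; linarith [hx'.2]
  have hz2' : 2 * z ≤ (N : ℤ) - 1 := by
    have : (2 * z : ℝ) < (N : ℝ) := by linarith
    have h2 : (2 * z : ℤ) < (N : ℤ) := by exact_mod_cast this
    omega
  have hz1' : -(N : ℤ) ≤ 2 * z := by
    have : -(N : ℝ) ≤ 2 * z := by linarith
    exact_mod_cast this
  have hub : 2 * w < 3 * (N : ℤ) := by omega
  have hlb : -(3 * (N : ℤ)) ≤ 2 * w := by omega
  constructor
  · have : (-(3 * (N : ℤ)) : ℝ) ≤ 2 * w := by exact_mod_cast hlb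
    push_cast at this ⊢
    linarith
  · have : (2 * w : ℝ) < 3 * (N : ℝ) := by exact_mod_cast hub
    push_cast at this ⊢
    linarith

lemma center_mem_box (hN : 1 ≤ N) (i : Vert d) : (N : ℤ) • i ∈ boxAt d N i := by
  intro c
  simp only [boxZ, Set.mem_setOf_eq, Pi.sub_apply, Pi.smul_apply, smul_eq_mul,
    sub_self]
  have hN' : (1 : ℝ) ≤ N := by exact_mod_cast hN
  norm_num
  constructor <;> [linarith; linarith]

lemma mem_box'_dist_center {i : Vert d} {a : Vert d} (ha : a ∈ boxAt' d N i) :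
    (dist1 a ((N : ℤ) • i) : ℝ) ≤ d * (3 * N) / 2 := by
  have hcoord : ∀ c : Fin d, ((a c - (N : ℤ) * i c).natAbs : ℝ) ≤ 3 * N / 2 := by
    intro c
    have ha' := ha c
    simp only [boxAt', boxZ, Set.mem_setOf_eq, Pi.sub_apply, Pi.smul_apply,
      smul_eq_mul] at ha'
    set z : ℤ := a c - (N : ℤ) * i c with hzdef
    have hr1 : -(3 * (N : ℝ)) ≤ 2 * (z : ℝ) := by push_cast at ha' ⊢; linarith [ha'.1]
    have hr2 : 2 * (z : ℝ) < 3 * (N : ℝ) := by push_cast at ha' ⊢; linarith [ha'.2]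
    have h1 : -(3 * (N : ℤ)) ≤ 2 * z := by exact_mod_cast hr1
    have h2 : 2 * z < 3 * (N : ℤ) := by exact_mod_cast hr2
    have hnat : 2 * z.natAbs ≤ 3 * N := by omega
    have : (2 * (z.natAbs : ℝ)) ≤ 3 * N := by exact_mod_cast hnat
    linarith
  have : (dist1 a ((N : ℤ) • i) : ℝ) = ∑ c : Fin d, ((a c - (N : ℤ) * i c).natAbs : ℝ) := by
    unfold dist1
    push_cast
    refine Finset.sum_congr rfl fun c _ => ?_
    simp [Pi.smul_apply, smul_eq_mul]
  rw [this]
  calc ∑ c : Fin d, ((a c - (N : ℤ) * i c).natAbs : ℝ)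
      ≤ ∑ _c : Fin d, (3 * (N : ℝ) / 2) := Finset.sum_le_sum fun c _ => hcoord c
    _ = d * (3 * N) / 2 := by
        simp [Finset.sum_const, Fintype.card_fin, nsmul_eq_mul]
        ring

end Boxes

/-! ### Cluster lemmas -/

section Clusters
variable {d : ℕ}

lemma clusterIn_subset {ω : Config d} {S : Set (Vert d)} {x₀ y : Vert d}
    (h : y ∈ clusterIn ω S x₀) : y ∈ S := by
  obtain ⟨γ, ⟨_, hS⟩, hft⟩ := h
  exact hS y (mem_of_getLast?eq hft.2)

lemma connectedIn_of_mem_clusterIn {ω : Config d} {S : Set (Vert d)} {x₀ x w : Vert d}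
    (hx : x ∈ clusterIn ω S x₀) (hw : w ∈ clusterIn ω S x₀) : ConnectedIn ω S x w := by
  obtain ⟨γ₁, ⟨⟨hne1, hc1⟩, hS1⟩, hh1, hl1⟩ := hx
  obtain ⟨γ₂, ⟨⟨hne2, hc2⟩, hS2⟩, hh2, hl2⟩ := hw
  have hc1r : γ₁.reverse.Chain' (edgeOpenPair ω) := by
    unfold List.Chain'; rw [List.isChain_reverse]
    exact List.IsChain.imp (fun a b h => edgeOpenPair_symm h) hc1
  obtain ⟨γ, hc, hh, hl, _, hmem⟩ := chain_glue hc1r hc2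
    (by rw [List.head?_reverse]; exact hl1)
    (by rw [List.getLast?_reverse]; exact hh1) hh2 hl2
  refine ⟨γ, ⟨⟨?_, hc⟩, ?_⟩, hh, hl⟩
  · rintro rfl; simp at hh
  · intro v hv
    rcases hmem v hv with h | h
    · exact hS1 v (List.mem_reverse.1 h)
    · exact hS2 v h

lemma clusterIn_extend {ω : Config d} {S : Set (Vert d)} {x₀ x u : Vert d}
    (hx : x ∈ clusterIn ω S x₀) (he : edgeOpenPair ω x u) (hu : u ∈ S) :
    u ∈ clusterIn ω S x₀ := by
  obtain ⟨γ, ⟨⟨hne, hc⟩, hS⟩, hh, hl⟩ := hx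
  refine ⟨γ ++ [u], ⟨⟨by simp, ?_⟩, ?_⟩, ?_, ?_⟩
  · unfold List.Chain'; rw [List.isChain_append]
    refine ⟨hc, List.isChain_singleton u, ?_⟩
    intro a ha b hb
    rw [hl] at ha
    have ha' : x = a := by simpa using ha
    have hb' : u = b := by simpa using hb
    subst ha'; subst hb'
    exact he
  · intro v hv
    rcases List.mem_append.1 hv with h | h
    · exact hS v h
    · have : v = u := by simpa using h
      subst this; exact hu
  · rw [List.head?_append_of_ne_nil _ hne]; exact hh
  · rw [show γ ++ [u] = γ ++ u :: [] from rfl, List.getLast?_append_cons]; rfl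

end Clusters

/-! ### The key cluster-intersection lemma -/

lemma clusters_meet {d N : ℕ} (hd : 2 ≤ d) (hN : 1 ≤ N) {ωp ωq : Config d}
    (hcoup : ∀ e, ωp e = true → ωq e = true)
    {i i' : Vert d} (hadj : adjStar i i')
    {Ci Ci' : Set (Vert d)}
    (hCi : IsClusterIn ωp (boxAt' d N i) Ci) (hDi : DiamGT Ci N)
    (hcross : ∀ j, boxAt d N j ⊆ boxAt' d N i → Crossing ωp Ci (boxAt d N j))
    (hmeet : ∀ γ : List (Vert d), IsOpenPath ωq γ → (∀ v ∈ γ, v ∈ boxAt' d N i') →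
      N + 1 ≤ γ.length → ∃ v ∈ γ, v ∈ Ci') :
    ∃ z, z ∈ Ci ∧ z ∈ Ci' := by
  have hsub : boxAt d N i' ⊆ boxAt' d N i := box_subset_box' hN (le_of_eq hadj)
  obtain ⟨x, hx, -⟩ := hcross i' hsub ⟨0, by omega⟩
  obtain ⟨x₀, hx₀S, hCeq⟩ := hCi
  obtain ⟨u₁, hu₁, u₂, hu₂, hdgt⟩ := hDi
  have hune : u₁ ≠ u₂ := by
    rintro rfl
    rw [distInfty_self] at hdgt
    omega
  obtain ⟨w, hwC, hwx⟩ : ∃ w, w ∈ Ci ∧ w ≠ x := by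
    by_cases h : u₁ = x
    · exact ⟨u₂, hu₂, fun hh => hune (by rw [h, hh])⟩
    · exact ⟨u₁, hu₁, h⟩
  have hxC : x ∈ Ci := hx.1
  have hconn : ConnectedIn ωp (boxAt' d N i) x w := by
    rw [hCeq] at hxC hwC
    exact connectedIn_of_mem_clusterIn hxC hwC
  obtain ⟨γ, ⟨⟨hne, hch⟩, hSmem⟩, hh, hl⟩ := hconn
  obtain ⟨u, rest, rfl⟩ : ∃ u rest, γ = x :: u :: rest := by
    cases γ with
    | nil => simp at hh
    | cons a t =>
      have ha : x = a := (by simpa using hh : a = x).symm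
      subst ha
      cases t with
      | nil =>
        exfalso
        apply hwx
        have : x = w := by simpa using hl
        exact this.symm
      | cons u rest => exact ⟨u, rest, rfl⟩
  have hedge : edgeOpenPair ωp x u := (List.isChain_cons_cons.1 hch).1
  have huS : u ∈ boxAt' d N i := hSmem u (by simp)
  have huC : u ∈ Ci := by
    rw [hCeq] at hxC ⊢
    exact clusterIn_extend hxC hedge huS
  have hub' : u ∈ boxAt' d N i' :=
    near_box_mem_box' hN hx.2 (le_of_eq (edgeOpenPair_dist1 hedge))
  have hxb' : x ∈ boxAt' d N i' :=
    near_box_mem_box' hN hx.2 (by rw [dist1_self]; omega)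
  have hlenpp : (pingpong x u (N + 1)).length = N + 1 := pingpong_length _ x u
  have hppne : pingpong x u (N + 1) ≠ [] := by
    intro h
    rw [h] at hlenpp
    simp at hlenpp
  have hchq : (pingpong x u (N + 1)).Chain' (edgeOpenPair ωq) :=
    pingpong_chain _ (edgeOpenPair_mono hcoup hedge)
      (edgeOpenPair_mono hcoup (edgeOpenPair_symm hedge))
  obtain ⟨v, hvpp, hvC'⟩ := hmeet (pingpong x u (N + 1)) ⟨hppne, hchq⟩
    (fun v hv => by rcases pingpong_mem hv with rfl | rfl; exacts [hxb', hub'])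
    (by omega)
  rcases pingpong_mem hvpp with rfl | rfl
  · exact ⟨v, hxC, hvC'⟩
  · exact ⟨v, huC, hvC'⟩
/-- Inside a *-connected set `ℐ` of `(p,q)`-good boxes at scale 1, far from a set `A`,
any two points of the crossing clusters of boxes of `ℐ` are joined by a `p`-open path of
length at most `12 β N₁ |ℐ|` avoiding `A`. -/
theorem statement12 (d : ℕ) (hd : 2 ≤ d) (p q β : ℝ) (hp : pc d < p) (hpq : p < q)
    (hq : q ≤ 1) (hβ : 1 ≤ β) (N : ℕ) (hN : 1 ≤ N)
    (ωp ωq : Config d) (hcoup : ∀ e, ωp e = true → ωq e = true)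
    (A : Set (Vert d)) (I : Finset (Vert d))
    (hstar : StarConnected (I : Set (Vert d)))
    (hgood : ∀ i ∈ I, GoodOne d ωp ωq β N i)
    (hdis : ∀ a ∈ A, ∀ i ∈ I, ∀ v ∈ boxAt d N i,
      (14 * β + 2 * (d : ℝ)) * (N : ℝ) < (dist1 a v : ℝ))
    (j k : Vert d) (hj : j ∈ I) (hk : k ∈ I) (x y : Vert d)
    (hxB : x ∈ boxAt' d N j) (hyB : y ∈ boxAt' d N k)
    (hxC : ∃ C : Set (Vert d), IsClusterIn ωp (boxAt' d N j) C ∧ DiamGT C N ∧ x ∈ C)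
    (hyC : ∃ C : Set (Vert d), IsClusterIn ωp (boxAt' d N k) C ∧ DiamGT C N ∧ y ∈ C) :
    ∃ γ : List (Vert d), IsOpenPath ωp γ ∧ PathFromTo γ x y ∧
      ((γ.length : ℝ) - 1) ≤ 12 * β * (N : ℝ) * (I.card : ℝ) ∧
      ∀ v ∈ γ, v ∉ A := by
  classical
  -- basic numeric facts
  have hNR : (1 : ℝ) ≤ N := by exact_mod_cast hN
  have hdR : (2 : ℝ) ≤ d := by exact_mod_cast hd
  have hβN : (0 : ℝ) ≤ 12 * β * N := by nlinarith
  -- the distinguished big cluster of each good site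
  obtain ⟨Cf, hCf⟩ : ∃ Cf : Vert d → Set (Vert d), ∀ i, i ∈ I →
      (IsClusterIn ωp (boxAt' d N i) (Cf i) ∧ DiamGT (Cf i) N) ∧
      ∀ C' : Set (Vert d), IsClusterIn ωp (boxAt' d N i) C' → DiamGT C' N → C' = Cf i := by
    refine ⟨fun i => if h : i ∈ I then ((hgood i h).1).choose else ∅, fun i hi => ?_⟩
    simp only [dif_pos hi]
    obtain ⟨h1, h2⟩ := ((hgood i hi).1).choose_spec
    exact ⟨h1, fun C' hc hdm => h2 C' ⟨hc, hdm⟩⟩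
  have hxCj : x ∈ Cf j := by
    obtain ⟨C, hC1, hC2, hxC'⟩ := hxC
    rw [← (hCf j hj).2 C hC1 hC2]; exact hxC'
  have hyCk : y ∈ Cf k := by
    obtain ⟨C, hC1, hC2, hyC'⟩ := hyC
    rw [← (hCf k hk).2 C hC1 hC2]; exact hyC'
  -- short connections inside a good box
  have hshort : ∀ i ∈ I, ∀ a ∈ Cf i, ∀ b ∈ Cf i,
      ∃ γ : List (Vert d), IsOpenPath ωp γ ∧ PathFromTo γ a b ∧
        ((γ.length : ℝ) - 1) ≤ 12 * β * N := by
    intro i hi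
    exact ((hgood i hi).2 (Cf i) (hCf i hi).1.1 (hCf i hi).1.2).2.1
  -- adjacent good sites have intersecting big clusters
  have hmeets : ∀ i ∈ I, ∀ i' ∈ I, adjStar i i' → ∃ z, z ∈ Cf i ∧ z ∈ Cf i' := by
    intro i hi i' hi' hadj
    exact clusters_meet hd hN hcoup hadj (hCf i hi).1.1 (hCf i hi).1.2
      (fun m hm => ((hgood i hi).2 (Cf i) (hCf i hi).1.1 (hCf i hi).1.2).1 m hm)
      (fun γ hγ hγb hγl =>
        ((hgood i' hi').2 (Cf i') (hCf i' hi').1.1 (hCf i' hi').1.2).2.2 γ hγ hγb hγl)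
  -- short paths started in a good box avoid A
  have havoid : ∀ i ∈ I, ∀ a ∈ Cf i, ∀ γ : List (Vert d),
      γ.Chain' (edgeOpenPair ωp) → γ.head? = some a → (γ.length : ℝ) ≤ 12 * β * N + 1 →
      ∀ v ∈ γ, v ∉ A := by
    intro i hi a ha γ hch hh hlen v hv hvA
    have h1 : dist1 a v + 1 ≤ γ.length := chain_dist1_head γ hch hh hv
    have haB : a ∈ boxAt' d N i := by
      obtain ⟨x₀, hx₀, hCeq⟩ := (hCf i hi).1.1
      rw [hCeq] at ha
      exact clusterIn_subset ha
    have h2 : (dist1 a ((N : ℤ) • i) : ℝ) ≤ d * (3 * N) / 2 := mem_box'_dist_center haB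
    have h3 := hdis v hvA i hi ((N : ℤ) • i) (center_mem_box hN i)
    have h4 : dist1 v ((N : ℤ) • i) ≤ dist1 v a + dist1 a ((N : ℤ) • i) :=
      dist1_triangle _ _ _
    have h5 : (dist1 v a : ℝ) ≤ 12 * β * N := by
      have h1' : (dist1 a v : ℝ) + 1 ≤ (γ.length : ℝ) := by exact_mod_cast h1
      rw [dist1_comm]
      linarith
    have h4' : (dist1 v ((N : ℤ) • i) : ℝ) ≤ (dist1 v a : ℝ) + (dist1 a ((N : ℤ) • i) : ℝ) := by
      exact_mod_cast h4
    nlinarith [h3, h4', h5, h2]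
  -- the chaining lemma along a *-path of good sites
  have key : ∀ L : List (Vert d), L.Chain' adjStar → (∀ s ∈ L, s ∈ I) →
      ∀ i₀ ilast : Vert d, L.head? = some i₀ → L.getLast? = some ilast →
      ∀ x' y' : Vert d, x' ∈ Cf i₀ → y' ∈ Cf ilast →
      ∃ γ : List (Vert d), IsOpenPath ωp γ ∧ PathFromTo γ x' y' ∧
        (γ.length : ℝ) ≤ 12 * β * N * L.length + 1 ∧ ∀ v ∈ γ, v ∉ A := by
    intro L
    induction L with
    | nil => intro _ _ i₀ _ hh; simp at hh
    | cons i t ih =>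
      intro hch hmem i₀ ilast hh hlast x' y' hx' hy'
      have hi0 : i = i₀ := by simpa using hh
      subst hi0
      have hiI : i ∈ I := hmem i (List.mem_cons_self)
      cases t with
      | nil =>
        have hil : i = ilast := by simpa using hlast
        subst hil
        obtain ⟨γ, hop, hft, hlen⟩ := hshort i hiI x' hx' y' hy'
        refine ⟨γ, hop, hft, ?_, ?_⟩
        · simp only [List.length_cons, List.length_nil]
          push_cast
          linarith
        · exact havoid i hiI x' hx' γ hop.2 hft.1 (by linarith)
      | cons i' t' =>
        have hadj : adjStar i i' := (List.isChain_cons_cons.1 hch).1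
        have hi'I : i' ∈ I := hmem i' (by simp)
        obtain ⟨z, hz1, hz2⟩ := hmeets i hiI i' hi'I hadj
        obtain ⟨γ₁, hop1, hft1, hlen1⟩ := hshort i hiI x' hx' z hz1
        have hlast2 : (i' :: t').getLast? = some ilast := by
          rw [← List.getLast?_cons_cons (a := i)]; exact hlast
        obtain ⟨γ₂, hop2, hft2, hlen2, hav2⟩ := ih (List.isChain_cons_cons.1 hch).2
          (fun s hs => hmem s (List.mem_cons_of_mem _ hs)) i' ilast rfl hlast2
          z y' hz2 hy'
        obtain ⟨γ, hcγ, hhγ, hlγ, hlenγ, hmemγ⟩ :=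
          chain_glue hop1.2 hop2.2 hft1.1 hft1.2 hft2.1 hft2.2
        refine ⟨γ, ⟨?_, hcγ⟩, ⟨hhγ, hlγ⟩, ?_, ?_⟩
        · rintro rfl; simp at hhγ
        · have hlenγ' : (γ.length : ℝ) + 1 = (γ₁.length : ℝ) + (γ₂.length : ℝ) := by
            exact_mod_cast hlenγ
          simp only [List.length_cons] at hlen2 ⊢
          push_cast at hlen2 ⊢
          linarith
        · intro v hv
          rcases hmemγ v hv with h | h
          · exact havoid i hiI x' hx' γ₁ hop1.2 hft1.1 (by linarith) v h
          · exact hav2 v h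
  -- apply the chaining lemma along a loop-erased *-path from j to k in I
  obtain ⟨L₀, hL₀ne, hL₀ch, hL₀mem, hL₀ft⟩ := hstar j hj k hk
  obtain ⟨L, hLch, hLnd, hLh, hLl, hLsub⟩ := chain_dedup L₀.length L₀ le_rfl hL₀ch
  have hLmem : ∀ s ∈ L, s ∈ I := fun s hs => hL₀mem s (hLsub s hs)
  obtain ⟨γ, hop, hft, hlen, hav⟩ := key L hLch hLmem j k
    (hLh.trans hL₀ft.1) (hLl.trans hL₀ft.2) x y hxCj hyCk
  refine ⟨γ, hop, hft, ?_, hav⟩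
  have hcard : L.length ≤ I.card := by
    have hsub : L.toFinset ⊆ I := fun s hs => hLmem s (List.mem_toFinset.1 hs)
    have := Finset.card_le_card hsub
    rwa [List.toFinset_card_of_nodup hLnd] at this
  have hcard' : (L.length : ℝ) ≤ (I.card : ℝ) := by exact_mod_cast hcard
  have hmul : 12 * β * N * (L.length : ℝ) ≤ 12 * β * N * (I.card : ℝ) :=
    mul_le_mul_of_nonneg_left hcard' hβN
  linarith

end FPP
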